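/- A graph is P4-free (contains no induced path on 4 vertices) if and only if it is a cograph, where cographs are defined inductively: the single-vertex graph is a cograph, the disjoint union of two cographs is a cograph, and the join of two cographs is a cograph. -/

import Mathlib

/-- Disjoint union of two simple graphs. -/
def disjUnion {V W : Type} (G : SimpleGraph V) (H : SimpleGraph W) :
    SimpleGraph (V ⊕ W) where
  Adj x y := Sum.LiftRel G.Adj H.Adj x y
  symm := by
    constructor
    intro x y h
    cases h with
    | inl h => exact Sum.LiftRel.inl h.symm
    | inr h => exact Sum.LiftRel.inr h.symm
  loopless := by
    constructor
    intro x h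
    cases h with
    | inl h => exact G.irrefl h
    | inr h => exact H.irrefl h

/-- Join of two simple graphs: disjoint union plus all edges across. -/
def graphJoin {V W : Type} (G : SimpleGraph V) (H : SimpleGraph W) :
    SimpleGraph (V ⊕ W) where
  Adj x y := Sum.LiftRel G.Adj H.Adj x y ∨ (x.isLeft ∧ y.isRight) ∨ (x.isRight ∧ y.isLeft)
  symm := by
    constructor
    rintro x y (h | ⟨h1, h2⟩ | ⟨h1, h2⟩)
    · cases h with
      | inl h => exact Or.inl (Sum.LiftRel.inl h.symm)
      | inr h => exact Or.inl (Sum.LiftRel.inr h.symm)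
    · exact Or.inr (Or.inr ⟨h2, h1⟩)
    · exact Or.inr (Or.inl ⟨h2, h1⟩)
  loopless := by
    constructor
    rintro x (h | ⟨h1, h2⟩ | ⟨h1, h2⟩)
    · cases h with
      | inl h => exact G.irrefl h
      | inr h => exact H.irrefl h
    · cases x <;> simp_all
    · cases x <;> simp_all

/-- Cographs, defined inductively: the one-vertex graph is a cograph, and the class is
closed under disjoint unions, joins, and graph isomorphism. -/
inductive IsCograph : (V : Type) → SimpleGraph V → Prop
  | single : IsCograph PUnit ⊥
  | union {V W : Type} {G : SimpleGraph V} {H : SimpleGraph W} :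
      IsCograph V G → IsCograph W H → IsCograph (V ⊕ W) (disjUnion G H)
  | join {V W : Type} {G : SimpleGraph V} {H : SimpleGraph W} :
      IsCograph V G → IsCograph W H → IsCograph (V ⊕ W) (graphJoin G H)
  | iso {V W : Type} {G : SimpleGraph V} {H : SimpleGraph W} :
      IsCograph V G → G ≃g H → IsCograph W H

/-- `G` contains an induced path on four vertices. -/
def HasInducedP4 {V : Type} (G : SimpleGraph V) : Prop :=
  ∃ a b c d : V, a ≠ b ∧ a ≠ c ∧ a ≠ d ∧ b ≠ c ∧ b ≠ d ∧ c ≠ d ∧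
    G.Adj a b ∧ G.Adj b c ∧ G.Adj c d ∧ ¬G.Adj a c ∧ ¬G.Adj a d ∧ ¬G.Adj b d

namespace P4Cograph

@[simp] lemma disjUnion_adj {V W : Type} {G : SimpleGraph V} {H : SimpleGraph W}
    {x y : V ⊕ W} : (disjUnion G H).Adj x y ↔ Sum.LiftRel G.Adj H.Adj x y := Iff.rfl

@[simp] lemma graphJoin_adj {V W : Type} {G : SimpleGraph V} {H : SimpleGraph W}
    {x y : V ⊕ W} : (graphJoin G H).Adj x y ↔
      (Sum.LiftRel G.Adj H.Adj x y ∨ (x.isLeft ∧ y.isRight) ∨ (x.isRight ∧ y.isLeft)) := Iff.rfl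

lemma p4_iso {V W : Type} {G : SimpleGraph V} {H : SimpleGraph W} (e : G ≃g H)
    (h : HasInducedP4 G) : HasInducedP4 H := by
  obtain ⟨a, b, c, d, hab, hac, had, hbc, hbd, hcd, e1, e2, e3, n1, n2, n3⟩ := h
  have inj := e.toEquiv.injective
  refine ⟨e a, e b, e c, e d, fun h => hab (inj h), fun h => hac (inj h), fun h => had (inj h),
    fun h => hbc (inj h), fun h => hbd (inj h), fun h => hcd (inj h),
    e.map_rel_iff.mpr e1, e.map_rel_iff.mpr e2, e.map_rel_iff.mpr e3,
    fun h => n1 (e.map_rel_iff.mp h), fun h => n2 (e.map_rel_iff.mp h),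
    fun h => n3 (e.map_rel_iff.mp h)⟩

lemma p4_induce {V : Type} {G : SimpleGraph V} {S : Set V}
    (h : HasInducedP4 (G.induce S)) : HasInducedP4 G := by
  obtain ⟨a, b, c, d, hab, hac, had, hbc, hbd, hcd, e1, e2, e3, n1, n2, n3⟩ := h
  exact ⟨a, b, c, d, fun h => hab (Subtype.ext h), fun h => hac (Subtype.ext h),
    fun h => had (Subtype.ext h), fun h => hbc (Subtype.ext h), fun h => hbd (Subtype.ext h),
    fun h => hcd (Subtype.ext h), e1, e2, e3, n1, n2, n3⟩

lemma p4_of_compl {V : Type} {G : SimpleGraph V} (h : HasInducedP4 Gᶜ) : HasInducedP4 G := by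
  obtain ⟨a, b, c, d, hab, hac, had, hbc, hbd, hcd, e1, e2, e3, n1, n2, n3⟩ := h
  rw [SimpleGraph.compl_adj] at e1 e2 e3
  have g1 : G.Adj a c := by
    by_contra h; exact n1 ((SimpleGraph.compl_adj _ _ _).mpr ⟨hac, h⟩)
  have g2 : G.Adj a d := by
    by_contra h; exact n2 ((SimpleGraph.compl_adj _ _ _).mpr ⟨had, h⟩)
  have g3 : G.Adj b d := by
    by_contra h; exact n3 ((SimpleGraph.compl_adj _ _ _).mpr ⟨hbd, h⟩)
  exact ⟨b, d, a, c, hbd, fun h => hab h.symm, hbc, fun h => had h.symm,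
    fun h => hcd h.symm, hac,
    g3, g2.symm, g1, fun h => e1.2 h.symm, e2.2, fun h => e3.2 h.symm⟩

/-- The key combinatorial step: if `V ∖ {v}` splits into two nonempty parts with all
cross edges present, and `G` is P4-free, then `G` itself admits a homogeneous split. -/
lemma key {V : Type} {G : SimpleGraph V} (hP4 : ¬ HasInducedP4 G) (v : V)
    (A B : Set V) (hA : A.Nonempty) (hB : B.Nonempty)
    (hvA : v ∉ A) (hvB : v ∉ B) (hdisj : ∀ x, x ∈ A → x ∈ B → False)
    (hcover : ∀ x, x ≠ v → x ∈ A ∨ x ∈ B)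
    (hcross : ∀ a ∈ A, ∀ b ∈ B, G.Adj a b) :
    ∃ S : Set V, S.Nonempty ∧ Sᶜ.Nonempty ∧
      ((∀ a ∈ S, ∀ b ∈ Sᶜ, ¬ G.Adj a b) ∨ (∀ a ∈ S, ∀ b ∈ Sᶜ, G.Adj a b)) := by
  obtain ⟨a₀', ha₀'⟩ := hA
  by_cases h1 : ∀ a ∈ A, G.Adj v a
  · refine ⟨A, ⟨a₀', ha₀'⟩, ⟨v, hvA⟩, Or.inr ?_⟩
    intro a ha b hb
    rcases eq_or_ne b v with rfl | hbv
    · exact (h1 a ha).symm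
    · rcases hcover b hbv with hbA | hbB
      · exact absurd hbA hb
      · exact hcross a ha b hbB
  by_cases h2 : ∀ b ∈ B, G.Adj v b
  · obtain ⟨b₀', hb₀'⟩ := hB
    refine ⟨B, ⟨b₀', hb₀'⟩, ⟨v, hvB⟩, Or.inr ?_⟩
    intro b hb a ha
    rcases eq_or_ne a v with rfl | hav
    · exact (h2 b hb).symm
    · rcases hcover a hav with haA | haB
      · exact (hcross a haA b hb).symm
      · exact absurd haB ha
  push_neg at h1 h2
  obtain ⟨a₀, ha₀A, ha₀⟩ := h1
  obtain ⟨b₀, hb₀B, hb₀⟩ := h2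
  by_cases h3 : ∀ x, ¬ G.Adj v x
  · refine ⟨{v}, ⟨v, rfl⟩, ⟨a₀, fun h => hvA (by rwa [Set.mem_singleton_iff.mp h] at ha₀A)⟩, Or.inl ?_⟩
    intro a ha b _
    rw [Set.mem_singleton_iff] at ha
    subst ha
    exact h3 b
  push_neg at h3
  obtain ⟨c, hc⟩ := h3
  have claim : ∀ m, m ≠ v → ¬ G.Adj v m → ∀ x, G.Adj v x → G.Adj x m := by
    intro m hmv hvm x hvx
    by_contra hxm
    have hxv : x ≠ v := fun h => G.loopless.irrefl v (h ▸ hvx)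
    rcases hcover x hxv with hxA | hxB
    · rcases hcover m hmv with hmA | hmB
      · -- both x, m in A : P4 = v, x, b₀, m
        refine hP4 ⟨v, x, b₀, m, fun h => hxv h.symm,
          by rintro rfl; exact hvB hb₀B, fun h => hmv h.symm,
          by rintro rfl; exact hdisj x hxA hb₀B,
          by rintro rfl; exact hvm hvx,
          by rintro rfl; exact hdisj b₀ hmA hb₀B,
          hvx, hcross x hxA b₀ hb₀B, (hcross m hmA b₀ hb₀B).symm, hb₀, hvm, hxm⟩
      · exact hxm (hcross x hxA m hmB)
    · rcases hcover m hmv with hmA | hmB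
      · exact hxm ((hcross m hmA x hxB).symm)
      · -- both x, m in B : P4 = v, x, a₀, m
        refine hP4 ⟨v, x, a₀, m, fun h => hxv h.symm,
          by rintro rfl; exact hvA ha₀A, fun h => hmv h.symm,
          fun h => hdisj x (h.symm ▸ ha₀A) hxB,
          by rintro rfl; exact hvm hvx,
          fun h => hdisj a₀ ha₀A (h.symm ▸ hmB),
          hvx, (hcross a₀ ha₀A x hxB).symm, hcross a₀ ha₀A m hmB, ha₀, hvm, hxm⟩
  refine ⟨{x | G.Adj v x}, ⟨c, hc⟩, ⟨v, G.loopless.irrefl v⟩, Or.inr ?_⟩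
  intro x hx b hb
  rcases eq_or_ne b v with hbv | hbv
  · rw [hbv]
    exact (hx : G.Adj v x).symm
  · exact claim b hbv hb x hx

lemma flip {V : Type} {G : SimpleGraph V} {S : Set V}
    (h : (∀ a ∈ S, ∀ b ∈ Sᶜ, ¬ Gᶜ.Adj a b) ∨ (∀ a ∈ S, ∀ b ∈ Sᶜ, Gᶜ.Adj a b)) :
    ((∀ a ∈ S, ∀ b ∈ Sᶜ, ¬ G.Adj a b) ∨ (∀ a ∈ S, ∀ b ∈ Sᶜ, G.Adj a b)) := by
  rcases h with h | h
  · refine Or.inr fun a ha b hb => ?_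
    have hab : a ≠ b := by rintro rfl; exact hb ha
    by_contra hadj
    exact h a ha b hb ((SimpleGraph.compl_adj _ _ _).mpr ⟨hab, hadj⟩)
  · exact Or.inl fun a ha b hb => ((SimpleGraph.compl_adj _ _ _).mp (h a ha b hb)).2

/-- Dichotomy: a P4-free graph on at least two vertices splits into two nonempty
parts with either no cross edges or all cross edges. -/
lemma dich : ∀ (n : ℕ) (V : Type) [Fintype V], Fintype.card V = n →
    ∀ G : SimpleGraph V, ¬ HasInducedP4 G → 2 ≤ Fintype.card V →
    ∃ S : Set V, S.Nonempty ∧ Sᶜ.Nonempty ∧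
      ((∀ a ∈ S, ∀ b ∈ Sᶜ, ¬ G.Adj a b) ∨ (∀ a ∈ S, ∀ b ∈ Sᶜ, G.Adj a b)) := by
  intro n
  induction n using Nat.strong_induction_on with
  | _ n ih =>
    intro V _ hcard G hP4 hcard2
    rcases Nat.lt_or_ge n 3 with hn | hn
    · -- card V = 2
      have h2 : Fintype.card V = 2 := by omega
      have : Nontrivial V := Fintype.one_lt_card_iff_nontrivial.mp (by omega)
      obtain ⟨x, y, hxy⟩ := this
      have hall : ∀ z : V, z = x ∨ z = y := by
        intro z
        by_contra hz
        push_neg at hz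
        have : 2 < Fintype.card V := Fintype.two_lt_card_iff.mpr ⟨z, x, y, hz.1, hz.2, hxy⟩
        omega
      by_cases hadj : G.Adj x y
      · refine ⟨{x}, ⟨x, rfl⟩, ⟨y, fun h => hxy (Set.mem_singleton_iff.mp h).symm⟩, Or.inr ?_⟩
        intro a ha b hb
        rw [Set.mem_singleton_iff] at ha
        subst ha
        rcases hall b with rfl | rfl
        · exact absurd rfl hb
        · exact hadj
      · refine ⟨{x}, ⟨x, rfl⟩, ⟨y, fun h => hxy (Set.mem_singleton_iff.mp h).symm⟩, Or.inl ?_⟩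
        intro a ha b hb
        rw [Set.mem_singleton_iff] at ha
        subst ha
        rcases hall b with rfl | rfl
        · exact absurd rfl hb
        · exact hadj
    · -- card V ≥ 3
      have : Nontrivial V := Fintype.one_lt_card_iff_nontrivial.mp (by omega)
      obtain ⟨v, _⟩ := exists_pair_ne V
      classical
      set U : Set V := {v}ᶜ with hU
      have hvU : v ∉ U := by simp [hU]
      have hcardU_lt : Fintype.card ↥U < n := by
        rw [← hcard]
        exact Fintype.card_subtype_lt (x := v) (by simp [hU])
      have hUnontriv : Nontrivial ↥U := by
        obtain ⟨a, b, c, hab, hac, hbc⟩ := Fintype.two_lt_card_iff.mp (by omega : 2 < Fintype.card V)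
        rcases eq_or_ne a v with rfl | hav
        · exact ⟨⟨b, by simp [hU, Ne.symm hab]⟩, ⟨c, by simp [hU, Ne.symm hac]⟩,
            fun h => hbc (congrArg Subtype.val h)⟩
        · rcases eq_or_ne b v with rfl | hbv
          · exact ⟨⟨a, by simp [hU, hav]⟩, ⟨c, by simp [hU, Ne.symm hbc]⟩,
              fun h => hac (congrArg Subtype.val h)⟩
          · exact ⟨⟨a, by simp [hU, hav]⟩, ⟨b, by simp [hU, hbv]⟩,
              fun h => hab (congrArg Subtype.val h)⟩
      have hcardU2 : 2 ≤ Fintype.card ↥U := Fintype.one_lt_card_iff_nontrivial.mpr hUnontriv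
      have hP4U : ¬ HasInducedP4 (G.induce U) := fun h => hP4 (p4_induce h)
      obtain ⟨S₀, hS₀, hS₀c, hdich⟩ :=
        ih (Fintype.card ↥U) hcardU_lt ↥U rfl (G.induce U) hP4U hcardU2
      set A : Set V := Subtype.val '' S₀ with hAdef
      set B : Set V := Subtype.val '' S₀ᶜ with hBdef
      have hAne : A.Nonempty := hS₀.image _
      have hBne : B.Nonempty := hS₀c.image _
      have hvA : v ∉ A := by
        rintro ⟨⟨x, hx⟩, -, he⟩
        exact hvU (he ▸ hx)
      have hvB : v ∉ B := by
        rintro ⟨⟨x, hx⟩, -, he⟩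
        exact hvU (he ▸ hx)
      have hdisj : ∀ x, x ∈ A → x ∈ B → False := by
        rintro x ⟨⟨y, hy⟩, hyS, hyx⟩ ⟨⟨z, hz⟩, hzS, hzx⟩
        refine hzS ?_
        rw [show (⟨z, hz⟩ : ↥U) = ⟨y, hy⟩ from Subtype.ext (hzx.trans hyx.symm)]
        exact hyS
      have hcover : ∀ x, x ≠ v → x ∈ A ∨ x ∈ B := by
        intro x hx
        have hxU : x ∈ U := by simp [hU, hx]
        by_cases hxS : (⟨x, hxU⟩ : ↥U) ∈ S₀
        · exact Or.inl ⟨⟨x, hxU⟩, hxS, rfl⟩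
        · exact Or.inr ⟨⟨x, hxU⟩, hxS, rfl⟩
      rcases hdich with hno | hyes
      · -- no cross edges in induced graph : use complement
        have hP4c : ¬ HasInducedP4 Gᶜ := fun h => hP4 (p4_of_compl h)
        have hcrossc : ∀ a ∈ A, ∀ b ∈ B, Gᶜ.Adj a b := by
          rintro a ⟨⟨y, hy⟩, hyS, hya⟩ b ⟨⟨z, hz⟩, hzS, hzb⟩
          subst hya; subst hzb
          refine (SimpleGraph.compl_adj _ _ _).mpr ⟨?_, hno ⟨y, hy⟩ hyS ⟨z, hz⟩ hzS⟩
          intro h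
          refine hzS ?_
          rw [show (⟨z, hz⟩ : ↥U) = ⟨y, hy⟩ from Subtype.ext h.symm]
          exact hyS
        obtain ⟨S, hS, hSc, hd⟩ := key hP4c v A B hAne hBne hvA hvB hdisj hcover hcrossc
        exact ⟨S, hS, hSc, flip hd⟩
      · -- all cross edges present
        have hcross : ∀ a ∈ A, ∀ b ∈ B, G.Adj a b := by
          rintro a ⟨⟨y, hy⟩, hyS, hya⟩ b ⟨⟨z, hz⟩, hzS, hzb⟩
          subst hya; subst hzb
          exact hyes ⟨y, hy⟩ hyS ⟨z, hz⟩ hzS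
        exact key hP4 v A B hAne hBne hvA hvB hdisj hcover hcross

/-- A graph with no edges between `S` and `Sᶜ` is the disjoint union of the induced parts. -/
noncomputable def unionIso {V : Type} (G : SimpleGraph V) (S : Set V)
    (h : ∀ a ∈ S, ∀ b ∈ Sᶜ, ¬ G.Adj a b) :
    disjUnion (G.induce S) (G.induce Sᶜ) ≃g G := by
  classical
  refine ⟨Equiv.sumCompl (· ∈ S), ?_⟩
  rintro (x | x) (y | y)
  · exact ⟨fun hadj => Sum.LiftRel.inl hadj,
      fun hadj => by cases hadj with | inl h => exact h⟩
  · exact iff_of_false (h x x.2 y y.2) (fun hadj => nomatch hadj)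
  · exact iff_of_false (fun hadj => h y y.2 x x.2 hadj.symm) (fun hadj => nomatch hadj)
  · exact ⟨fun hadj => Sum.LiftRel.inr hadj,
      fun hadj => by cases hadj with | inr h => exact h⟩

/-- A graph with all edges between `S` and `Sᶜ` present is the join of the induced parts. -/
noncomputable def joinIso {V : Type} (G : SimpleGraph V) (S : Set V)
    (h : ∀ a ∈ S, ∀ b ∈ Sᶜ, G.Adj a b) :
    graphJoin (G.induce S) (G.induce Sᶜ) ≃g G := by
  classical
  refine ⟨Equiv.sumCompl (· ∈ S), ?_⟩
  rintro (x | x) (y | y)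
  · constructor
    · intro hadj
      exact Or.inl (Sum.LiftRel.inl hadj)
    · rintro (hadj | ⟨-, h2⟩ | ⟨h1, -⟩)
      · cases hadj with | inl h => exact h
      · cases h2
      · cases h1
  · exact iff_of_true (h x x.2 y y.2) (Or.inr (Or.inl ⟨rfl, rfl⟩))
  · exact iff_of_true ((h y y.2 x x.2).symm) (Or.inr (Or.inr ⟨rfl, rfl⟩))
  · constructor
    · intro hadj
      exact Or.inl (Sum.LiftRel.inr hadj)
    · rintro (hadj | ⟨h1, -⟩ | ⟨-, h2⟩)
      · cases hadj with | inr h => exact h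
      · cases h1
      · cases h2

lemma join_adj_inl_inl {V W : Type} {G : SimpleGraph V} {H : SimpleGraph W} {a b : V}
    (h : (graphJoin G H).Adj (Sum.inl a) (Sum.inl b)) : G.Adj a b := by
  rcases h with h | ⟨-, h2⟩ | ⟨h1, -⟩
  · exact Sum.liftRel_inl_inl.mp h
  · cases h2
  · cases h1

lemma join_adj_inr_inr {V W : Type} {G : SimpleGraph V} {H : SimpleGraph W} {a b : W}
    (h : (graphJoin G H).Adj (Sum.inr a) (Sum.inr b)) : H.Adj a b := by
  rcases h with h | ⟨h1, -⟩ | ⟨-, h2⟩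
  · exact Sum.liftRel_inr_inr.mp h
  · cases h1
  · cases h2

lemma cograph_of_card_one {V : Type} [Fintype V] (G : SimpleGraph V)
    (h : Fintype.card V = 1) : IsCograph V G := by
  obtain ⟨x, hx⟩ := Fintype.card_eq_one_iff.mp h
  refine IsCograph.iso IsCograph.single ⟨⟨fun _ => x, fun _ => PUnit.unit, fun _ => rfl,
    fun y => (hx y).symm⟩, ?_⟩
  intro a b
  constructor <;> intro hadj <;>
    first
    | exact hadj.elim
    | exact absurd hadj (G.loopless.irrefl x)

lemma cograph_of_p4free_aux : ∀ (n : ℕ) (V : Type) [Fintype V] [Nonempty V],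
    Fintype.card V = n → ∀ G : SimpleGraph V, ¬ HasInducedP4 G → IsCograph V G := by
  intro n
  induction n using Nat.strong_induction_on with
  | _ n ih =>
    intro V _ _ hcard G hP4
    have hpos : 1 ≤ Fintype.card V := Fintype.card_pos
    rcases Nat.lt_or_ge (Fintype.card V) 2 with hlt | hge
    · exact cograph_of_card_one G (by omega)
    · obtain ⟨S, hS, hSc, hd⟩ := dich n V hcard G hP4 hge
      classical
      obtain ⟨s₀, hs₀⟩ := hS
      obtain ⟨t₀, ht₀⟩ := hSc
      haveI : Nonempty ↥S := ⟨⟨s₀, hs₀⟩⟩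
      haveI : Nonempty ↥(Sᶜ) := ⟨⟨t₀, ht₀⟩⟩
      have hcS : Fintype.card ↥S < n := by
        rw [← hcard]
        exact Fintype.card_subtype_lt (x := t₀) ht₀
      have hcSc : Fintype.card ↥(Sᶜ) < n := by
        rw [← hcard]
        exact Fintype.card_subtype_lt (x := s₀) (by simp [hs₀])
      have h1 : IsCograph ↥S (G.induce S) :=
        ih _ hcS ↥S rfl _ (fun h => hP4 (p4_induce h))
      have h2 : IsCograph ↥(Sᶜ) (G.induce Sᶜ) :=
        ih _ hcSc ↥(Sᶜ) rfl _ (fun h => hP4 (p4_induce h))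
      rcases hd with hno | hyes
      · exact IsCograph.iso (IsCograph.union h1 h2) (unionIso G S hno)
      · exact IsCograph.iso (IsCograph.join h1 h2) (joinIso G S hyes)

lemma p4free_of_cograph : ∀ {V : Type} {G : SimpleGraph V},
    IsCograph V G → ¬ HasInducedP4 G := by
  intro V G hc
  induction hc with
  | single =>
    rintro ⟨a, b, c, d, hab, -⟩
    exact hab (Subsingleton.elim a b)
  | union hG hH ihG ihH =>
    rintro ⟨a, b, c, d, hab, hac, had, hbc, hbd, hcd, e1, e2, e3, n1, n2, n3⟩
    rw [disjUnion_adj] at e1 e2 e3 n1 n2 n3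
    rcases a with a | a <;> rcases b with b | b <;> rcases c with c | c <;>
      rcases d with d | d <;>
      first
      | (cases e1; done)
      | (cases e2; done)
      | (cases e3; done)
      | exact ihG ⟨a, b, c, d, fun h => hab (congrArg Sum.inl h),
          fun h => hac (congrArg Sum.inl h), fun h => had (congrArg Sum.inl h),
          fun h => hbc (congrArg Sum.inl h), fun h => hbd (congrArg Sum.inl h),
          fun h => hcd (congrArg Sum.inl h),
          Sum.liftRel_inl_inl.mp e1, Sum.liftRel_inl_inl.mp e2, Sum.liftRel_inl_inl.mp e3,
          fun h => n1 (Sum.LiftRel.inl h), fun h => n2 (Sum.LiftRel.inl h),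
          fun h => n3 (Sum.LiftRel.inl h)⟩
      | exact ihH ⟨a, b, c, d, fun h => hab (congrArg Sum.inr h),
          fun h => hac (congrArg Sum.inr h), fun h => had (congrArg Sum.inr h),
          fun h => hbc (congrArg Sum.inr h), fun h => hbd (congrArg Sum.inr h),
          fun h => hcd (congrArg Sum.inr h),
          Sum.liftRel_inr_inr.mp e1, Sum.liftRel_inr_inr.mp e2, Sum.liftRel_inr_inr.mp e3,
          fun h => n1 (Sum.LiftRel.inr h), fun h => n2 (Sum.LiftRel.inr h),
          fun h => n3 (Sum.LiftRel.inr h)⟩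
  | join hG hH ihG ihH =>
    rintro ⟨a, b, c, d, hab, hac, had, hbc, hbd, hcd, e1, e2, e3, n1, n2, n3⟩
    rcases a with a | a <;> rcases b with b | b <;> rcases c with c | c <;>
      rcases d with d | d <;>
      first
      | exact n1 (Or.inr (Or.inl ⟨rfl, rfl⟩))
      | exact n1 (Or.inr (Or.inr ⟨rfl, rfl⟩))
      | exact n2 (Or.inr (Or.inl ⟨rfl, rfl⟩))
      | exact n2 (Or.inr (Or.inr ⟨rfl, rfl⟩))
      | exact n3 (Or.inr (Or.inl ⟨rfl, rfl⟩))
      | exact n3 (Or.inr (Or.inr ⟨rfl, rfl⟩))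
      | exact ihG ⟨a, b, c, d, fun h => hab (congrArg Sum.inl h),
          fun h => hac (congrArg Sum.inl h), fun h => had (congrArg Sum.inl h),
          fun h => hbc (congrArg Sum.inl h), fun h => hbd (congrArg Sum.inl h),
          fun h => hcd (congrArg Sum.inl h),
          join_adj_inl_inl e1, join_adj_inl_inl e2, join_adj_inl_inl e3,
          fun h => n1 (Or.inl (Sum.LiftRel.inl h)), fun h => n2 (Or.inl (Sum.LiftRel.inl h)),
          fun h => n3 (Or.inl (Sum.LiftRel.inl h))⟩
      | exact ihH ⟨a, b, c, d, fun h => hab (congrArg Sum.inr h),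
          fun h => hac (congrArg Sum.inr h), fun h => had (congrArg Sum.inr h),
          fun h => hbc (congrArg Sum.inr h), fun h => hbd (congrArg Sum.inr h),
          fun h => hcd (congrArg Sum.inr h),
          join_adj_inr_inr e1, join_adj_inr_inr e2, join_adj_inr_inr e3,
          fun h => n1 (Or.inl (Sum.LiftRel.inr h)), fun h => n2 (Or.inl (Sum.LiftRel.inr h)),
          fun h => n3 (Or.inl (Sum.LiftRel.inr h))⟩
  | iso hc e ih =>
    intro h
    exact ih (p4_iso (SimpleGraph.Iso.symm e) h)

end P4Cograph

/-- A (finite, nonempty) graph is P4-free if and only if it is a cograph. -/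
theorem stmt0 (V : Type) [Fintype V] [Nonempty V] (G : SimpleGraph V) :
    IsCograph V G ↔ ¬ HasInducedP4 G := by
  constructor
  · exact P4Cograph.p4free_of_cograph
  · exact P4Cograph.cograph_of_p4free_aux (Fintype.card V) V rfl G
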